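/- (Proposition 2, part III.) For all natural numbers t̄₁ ≤ t̄₂ and every n ≥ 0, the partial sums of φ are monotonically nonincreasing in the threshold: Σ_{j=0}^{n} φ^{(t̄₁)}(j) ≥ Σ_{j=0}^{n} φ^{(t̄₂)}(j). -/
import Mathlib


open Filter

/-- Proposition 2, part III: the partial sums of `φ` are
monotonically nonincreasing in the threshold. `φ t` is the sequence `φ^{(t)}`. -/
theorem phi_partial_sums_antitone_in_threshold
    (lam lam_e : ℝ) (hlam0 : 0 < lam) (hlam1 : lam < 1)
    (hle0 : 0 < lam_e) (hle1 : lam_e < 1)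
    (φ : ℕ → ℕ → ℝ)
    (hφ0 : ∀ t : ℕ, φ t 0 = lam * lam_e / (lam * (t : ℝ) + 1))
    (hφ1 : ∀ t : ℕ, ∀ j, j < t → φ t (j + 1) = (1 - lam) * (1 - lam_e) * φ t j)
    (hφ2 : ∀ t : ℕ, ∀ j, t ≤ j → φ t (j + 1) =
      (1 - lam) * (1 - lam_e) * φ t j + lam * (1 - lam_e) * φ t (j - t))
    (t1 t2 : ℕ) (h12 : t1 ≤ t2) (n : ℕ) :
    ∑ j ∈ Finset.range (n + 1), φ t2 j ≤ ∑ j ∈ Finset.range (n + 1), φ t1 j := by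
  have hα0 : (0:ℝ) < (1 - lam) * (1 - lam_e) := mul_pos (by linarith) (by linarith)
  have hβ0 : (0:ℝ) < lam * (1 - lam_e) := mul_pos hlam0 (by linarith)
  have hφnn : ∀ t j, 0 ≤ φ t j := by
    intro t j
    induction j using Nat.strong_induction_on with
    | _ j ih =>
      cases j with
      | zero => rw [hφ0]; positivity
      | succ k =>
        rcases lt_or_ge k t with h | h
        · rw [hφ1 t k h]
          exact mul_nonneg hα0.le (ih k (Nat.lt_succ_self k))
        · rw [hφ2 t k h]
          exact add_nonneg (mul_nonneg hα0.le (ih k (Nat.lt_succ_self k)))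
            (mul_nonneg hβ0.le (ih (k - t) (Nat.lt_succ_of_le (Nat.sub_le k t))))
  set S : ℕ → ℕ → ℝ := fun t n => ∑ j ∈ Finset.range (n + 1), φ t j with hS
  have hSnn : ∀ t n, 0 ≤ S t n := fun t n => Finset.sum_nonneg fun i _ => hφnn t i
  have hSmono : ∀ t m n, m ≤ n → S t m ≤ S t n := by
    intro t m n h
    apply Finset.sum_le_sum_of_subset_of_nonneg (Finset.range_subset_range.mpr (by omega))
    intro i _ _; exact hφnn t i
  have hS0 : ∀ t, S t 0 = φ t 0 := by intro t; simp [hS]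
  have hSsucc : ∀ t n, S t (n + 1) = S t n + φ t (n + 1) := by
    intro t n; simp [hS, Finset.sum_range_succ]
  have hSrec : ∀ t n, S t (n + 1) = φ t 0 + (1 - lam) * (1 - lam_e) * S t n
      + (if t ≤ n then lam * (1 - lam_e) * S t (n - t) else 0) := by
    intro t n
    induction n with
    | zero =>
      rcases Nat.eq_zero_or_pos t with ht | ht
      · subst ht
        rw [if_pos le_rfl, hSsucc 0 0, hφ2 0 0 le_rfl]
        simp only [Nat.sub_zero, hS0]
        ring
      · rw [if_neg (by omega), hSsucc t 0, hS0, hφ1 t 0 ht]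
        ring
    | succ m ih =>
      rcases le_or_gt t m with h | h
      · rw [if_pos h] at ih
        rw [if_pos (by omega : t ≤ m + 1)]
        rw [hSsucc t (m+1), hφ2 t (m+1) (by omega)]
        have e1 : m + 1 - t = (m - t) + 1 := by omega
        rw [e1, hSsucc t (m - t)]
        linear_combination ih - (1 - lam) * (1 - lam_e) * hSsucc t m
      · by_cases h2 : t = m + 1
        · subst h2
          rw [if_neg (by omega)] at ih
          rw [if_pos le_rfl, hSsucc (m+1) (m+1), hφ2 (m+1) (m+1) le_rfl]
          simp only [Nat.sub_self, hS0]
          linear_combination ih - (1 - lam) * (1 - lam_e) * hSsucc (m+1) m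
        · rw [if_neg (by omega)] at ih
          rw [if_neg (by omega), hSsucc t (m+1), hφ1 t (m+1) (by omega)]
          linear_combination ih - (1 - lam) * (1 - lam_e) * hSsucc t m
  have hφ00 : φ t2 0 ≤ φ t1 0 := by
    rw [hφ0, hφ0, div_le_div_iff₀ (by positivity) (by positivity)]
    have hc : (t1:ℝ) ≤ t2 := by exact_mod_cast h12
    nlinarith [mul_le_mul_of_nonneg_left hc (show (0:ℝ) ≤ lam * lam_e * lam by positivity)]
  have main : ∀ n, S t2 n ≤ S t1 n := by
    intro n
    induction n using Nat.strong_induction_on with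
    | _ n ih =>
      cases n with
      | zero => rw [hS0, hS0]; exact hφ00
      | succ m =>
        rw [hSrec t1 m, hSrec t2 m]
        have h1 : (1-lam)*(1-lam_e) * S t2 m ≤ (1-lam)*(1-lam_e) * S t1 m :=
          mul_le_mul_of_nonneg_left (ih m (Nat.lt_succ_self m)) hα0.le
        rcases le_or_gt t2 m with h | h
        · rw [if_pos h, if_pos (h12.trans h)]
          have h2 : S t2 (m - t2) ≤ S t1 (m - t1) :=
            (ih (m - t2) (by omega)).trans (hSmono t1 _ _ (by omega))
          have h3 := mul_le_mul_of_nonneg_left h2 hβ0.le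
          linarith
        · rw [if_neg (by omega)]
          have h4 : (0:ℝ) ≤ (if t1 ≤ m then lam * (1-lam_e) * S t1 (m - t1) else 0) := by
            split
            · exact mul_nonneg hβ0.le (hSnn t1 _)
            · exact le_rfl
          linarith
  exact main n
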